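/- Let K ⊆ L be a field extension and suppose L is a finitely generated field extension of K of transcendence degree 1 such that K is algebraically closed in L (i.e. every element of L algebraic over K lies in K). If K has characteristic p > 0 and K is perfect, then L is a separable extension of K, i.e. there exists a transcendence basis t of L over K such that L is a finite separable extension of K(t). -/

import Mathlib

set_option maxHeartbeats 1000000
set_option synthInstance.maxHeartbeats 1000000

open Polynomial IntermediateField

namespace MacLaneProof

/-! ### Bivariate polynomial infrastructure: variable swap and partial derivatives -/

section Swap

variable {R : Type*} [CommRing R]

/-- Swap the two variables of `R[X][Y]`. -/
noncomputable def swap : R[X][X] →+* R[X][X] :=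
  eval₂RingHom (eval₂RingHom ((C : R[X] →+* R[X][X]).comp (C : R →+* R[X])) X) (C X)

@[simp] lemma swap_CC (a : R) : swap (C (C a) : R[X][X]) = C (C a) := by
  simp [swap]

@[simp] lemma swap_X : swap (X : R[X][X]) = C X := by
  simp [swap]

@[simp] lemma swap_CX : swap (C (X : R[X]) : R[X][X]) = X := by
  simp [swap]

lemma swap_C (c : R[X]) : swap (C c : R[X][X]) = c.map (C : R →+* R[X]) := by
  simp only [swap, coe_eval₂RingHom, eval₂_C]
  rfl

lemma swap_comp_swap : (swap : R[X][X] →+* R[X][X]).comp swap = RingHom.id _ := by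
  apply ringHom_ext'
  · apply ringHom_ext'
    · ext a
      simp
    · simp
  · simp

@[simp] lemma swap_swap (f : R[X][X]) : swap (swap f) = f := by
  have := congrArg (fun g : R[X][X] →+* R[X][X] => g f) swap_comp_swap
  simpa using this

lemma swap_injective : Function.Injective (swap : R[X][X] → R[X][X]) :=
  Function.LeftInverse.injective swap_swap

/-- Derivative with respect to the inner variable. -/
noncomputable def dX (f : R[X][X]) : R[X][X] :=
  f.sum fun n c => monomial n (derivative c)

lemma dX_add (f g : R[X][X]) : dX (f + g) = dX f + dX g := by
  unfold dX
  rw [sum_add_index] <;> simp [map_add]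

lemma dX_monomial (n : ℕ) (c : R[X]) : dX (monomial n c) = monomial n (derivative c) := by
  unfold dX
  rw [sum_monomial_index]
  simp

lemma coeff_dX (f : R[X][X]) (n : ℕ) : (dX f).coeff n = derivative (f.coeff n) := by
  unfold dX
  rw [Polynomial.sum, finset_sum_coeff]
  simp only [coeff_monomial]
  rw [Finset.sum_ite_eq' f.support n fun i => derivative (f.coeff i)]
  by_cases h : n ∈ f.support
  · simp [h]
  · simp only [h, if_false]
    rw [notMem_support_iff.mp h]
    simp

lemma natDegree_dX_le (f : R[X][X]) : (dX f).natDegree ≤ f.natDegree := by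
  apply natDegree_le_iff_coeff_eq_zero.mpr
  intro m hm
  rw [coeff_dX, coeff_eq_zero_of_natDegree_lt hm]
  simp

lemma derivative_swap (f : R[X][X]) : derivative (swap f) = swap (dX f) := by
  induction f using Polynomial.induction_on' with
  | add p q hp hq => simp [map_add, hp, hq, dX_add]
  | monomial n c =>
    have h1 : ∀ d : R[X], swap (monomial n d : R[X][X]) = d.map (C : R →+* R[X]) * C X ^ n := by
      intro d
      rw [← C_mul_X_pow_eq_monomial, RingHom.map_mul, RingHom.map_pow, swap_X, swap_C]
    rw [dX_monomial, h1, h1]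
    simp [derivative_mul, derivative_pow, derivative_map]

/-- A symmetric degree measure on `R[X][Y]`. -/
noncomputable def μ (f : R[X][X]) : ℕ := f.natDegree + (swap f).natDegree

lemma μ_swap (f : R[X][X]) : μ (swap f) = μ f := by
  unfold μ; rw [swap_swap, Nat.add_comm]

lemma μ_derivative_lt {f : R[X][X]} (hd : derivative f ≠ 0) : μ (derivative f) < μ f := by
  have hnd : f.natDegree ≠ 0 := by
    intro h
    exact hd (by rw [eq_C_of_natDegree_eq_zero h, derivative_C])
  have h1 : (derivative f).natDegree < f.natDegree := natDegree_derivative_lt hnd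
  have hsd : swap (derivative f) = dX (swap f) := by
    have := derivative_swap (swap f)
    rw [swap_swap] at this
    rw [this, swap_swap]
  have h2 : (swap (derivative f)).natDegree ≤ (swap f).natDegree := by
    rw [hsd]; exact natDegree_dX_le _
  exact Nat.add_lt_add_of_lt_of_le h1 h2

lemma μ_pow [IsDomain R] (g : R[X][X]) (n : ℕ) : μ (g ^ n) = n * μ g := by
  unfold μ; rw [map_pow, natDegree_pow, natDegree_pow]; ring

lemma μ_eq_zero [Nontrivial R] {f : R[X][X]} (h : μ f = 0) : ∃ k : R, f = C (C k) := by
  unfold μ at h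
  obtain ⟨h1, h2⟩ := Nat.add_eq_zero.mp h
  obtain ⟨c, hc⟩ := natDegree_eq_zero.mp h1
  subst hc
  rw [swap_C, natDegree_map_eq_of_injective Polynomial.C_injective] at h2
  obtain ⟨k, hk⟩ := natDegree_eq_zero.mp h2
  exact ⟨k, by rw [hk]⟩

end Swap

/-! ### Extraction of `p`-th roots over a perfect field -/

section Frobenius

variable (p : ℕ) [Fact p.Prime] {K : Type*} [Field K] [CharP K p] [PerfectField K]

lemma exists_pow_of_derivative_eq_zero {c : K[X]} (hc : derivative c = 0) :
    ∃ r : K[X], r ^ p = c := by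
  have hp : p ≠ 0 := (Fact.out : p.Prime).ne_zero
  refine ⟨(contract p c).map ((frobeniusEquiv K p).symm : K ≃+* K).toRingHom, ?_⟩
  rw [← Polynomial.map_frobenius_expand p, Polynomial.map_expand, Polynomial.map_map]
  have h : (frobenius K p).comp ((frobeniusEquiv K p).symm : K ≃+* K).toRingHom
      = RingHom.id K := by
    ext a
    simpa using (frobeniusEquiv K p).apply_symm_apply a
  rw [h, Polynomial.map_id, Polynomial.expand_contract p hc hp]

lemma exists_pow_of_derivatives_eq_zero {f : K[X][X]} (h1 : derivative f = 0)
    (h2 : derivative (swap f) = 0) : ∃ g : K[X][X], g ^ p = f := by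
  have hp : p ≠ 0 := (Fact.out : p.Prime).ne_zero
  have hdX : dX f = 0 := by
    apply swap_injective
    rw [← derivative_swap, h2, map_zero]
  have hcoeff : ∀ n, derivative (f.coeff n) = 0 := fun n => by
    rw [← coeff_dX, hdX, coeff_zero]
  set F := contract p f with hF
  have hFc : ∀ n, ∃ r : K[X], r ^ p = F.coeff n := fun n => by
    apply exists_pow_of_derivative_eq_zero p
    rw [hF, coeff_contract hp]
    exact hcoeff _
  choose r hr using hFc
  refine ⟨∑ n ∈ F.support, monomial n (r n), ?_⟩
  have hmap : (∑ n ∈ F.support, monomial n (r n)).map (frobenius K[X] p) = F := by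
    refine Polynomial.ext fun n => ?_
    rw [coeff_map, Polynomial.finset_sum_coeff]
    simp only [coeff_monomial]
    rw [Finset.sum_ite_eq' F.support n r]
    by_cases h : n ∈ F.support
    · simp only [h, if_true, frobenius_def]
      exact hr n
    · simp only [h, if_false, map_zero]
      exact (notMem_support_iff.mp h).symm
  rw [← Polynomial.map_frobenius_expand p, Polynomial.map_expand, hmap, hF,
    Polynomial.expand_contract p h1 hp]

end Frobenius

/-! ### Evaluation of bivariate polynomials and the core separability lemma -/

section Ev

variable {K L : Type*} [Field K] [Field L] [Algebra K L]

/-- Evaluation of a bivariate polynomial at a pair of points of `L`. -/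
noncomputable def ev (t a : L) : K[X][X] →+* L :=
  eval₂RingHom ((Polynomial.aeval t : K[X] →ₐ[K] L) : K[X] →+* L) a

@[simp] lemma ev_C (t a : L) (c : K[X]) : ev t a (C c) = Polynomial.aeval t c := by
  simp [ev]

@[simp] lemma ev_X (t a : L) : ev t a (X : K[X][X]) = a := by simp [ev]

lemma ev_CC (t a : L) (k : K) : ev t a (C (C k)) = algebraMap K L k := by
  simp

lemma ev_comp_swap (t a : L) : (ev (K := K) t a).comp swap = ev a t := by
  apply ringHom_ext'
  · apply ringHom_ext'
    · ext k
      simp only [RingHom.coe_comp, RingHom.comp_apply, Function.comp_apply]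
      rw [swap_CC]
      simp
    · simp only [RingHom.coe_comp, RingHom.comp_apply, Function.comp_apply]
      rw [swap_CX]
      simp
  · simp only [RingHom.coe_comp, RingHom.comp_apply, Function.comp_apply]
    rw [swap_X]
    simp

lemma ev_swap (t a : L) (f : K[X][X]) : ev t a (swap f) = ev a t f := by
  have := congrArg (fun g : K[X][X] →+* L => g f) (ev_comp_swap t a)
  simpa using this

/-- The map `K[X] → K⟮t⟯` sending `X` to the generator. -/
noncomputable def ψ (t : L) : K[X] →+* ↥(IntermediateField.adjoin K ({t} : Set L)) :=
  (Polynomial.aeval (AdjoinSimple.gen K t) : K[X] →ₐ[K] ↥K⟮t⟯).toRingHom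

lemma algebraMap_comp_ψ (t : L) :
    (algebraMap (↥K⟮t⟯) L).comp (ψ t) = ((Polynomial.aeval t : K[X] →ₐ[K] L) : K[X] →+* L) := by
  apply ringHom_ext'
  · ext k
    simp [ψ]
  · simp [ψ]

lemma ev_eq_aeval_map (t a : L) (f : K[X][X]) :
    Polynomial.aeval a (f.map (ψ t)) = ev t a f := by
  rw [Polynomial.aeval_def, Polynomial.eval₂_map, algebraMap_comp_ψ]
  rfl

lemma ψ_injective {t : L} (ht : Transcendental K t) : Function.Injective (ψ (K := K) t) := by
  rw [injective_iff_map_eq_zero]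
  intro c hc
  have h : Polynomial.aeval t c = 0 := by
    have := congrArg (algebraMap (↥K⟮t⟯) L) hc
    rw [← RingHom.comp_apply, algebraMap_comp_ψ] at this
    simpa using this
  exact transcendental_iff.mp ht c h

lemma sep_of_aeval {F : Type*} [Field F] [Algebra F L] {a : L} {P : F[X]}
    (h0 : Polynomial.aeval a P = 0) (h1 : Polynomial.aeval a (derivative P) ≠ 0) :
    IsIntegral F a ∧ IsSeparable F a := by
  have hP : P ≠ 0 := fun h => h1 (by rw [h]; simp)
  have hint : IsIntegral F a := isAlgebraic_iff_isIntegral.mp ⟨P, hP, h0⟩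
  obtain ⟨q, hq⟩ := minpoly.dvd F a h0
  refine ⟨hint, ?_⟩
  rw [IsSeparable, separable_iff_derivative_ne_zero (minpoly.irreducible hint)]
  intro hder
  apply h1
  rw [hq, derivative_mul, map_add, map_mul, map_mul, minpoly.aeval, hder]
  simp

lemma isAlgebraic_of_epoly {t b : L} (ht : Transcendental K t)
    (h : ∃ f : K[X][X], f ≠ 0 ∧ ev t b f = 0) : IsAlgebraic (↥K⟮t⟯) b := by
  obtain ⟨f, hf0, hfe⟩ := h
  exact ⟨f.map (ψ t), (Polynomial.map_ne_zero_iff (ψ_injective ht)).mpr hf0,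
    by rw [ev_eq_aeval_map]; exact hfe⟩

lemma isAlgebraic_adjoinRing_of_epoly {t b : L} (ht : Transcendental K t)
    (h : ∃ f : K[X][X], f ≠ 0 ∧ ev t b f = 0) :
    IsAlgebraic (Algebra.adjoin K ({t} : Set L)) b := by
  obtain ⟨f, hf0, hfe⟩ := h
  let ψ' : K[X] →+* Algebra.adjoin K ({t} : Set L) :=
    ((Polynomial.aeval (⟨t, Algebra.self_mem_adjoin_singleton K t⟩ :
      Algebra.adjoin K ({t} : Set L)) :
      K[X] →ₐ[K] Algebra.adjoin K ({t} : Set L)) : K[X] →+* Algebra.adjoin K ({t} : Set L))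
  have hcomp : (algebraMap (Algebra.adjoin K ({t} : Set L)) L).comp ψ'
      = ((Polynomial.aeval t : K[X] →ₐ[K] L) : K[X] →+* L) := by
    apply ringHom_ext'
    · ext k
      have h3 : ψ' (C k) = algebraMap K (Algebra.adjoin K ({t} : Set L)) k := by
        simp [ψ']
      simp only [RingHom.coe_comp, Function.comp_apply, RingHom.coe_coe, Polynomial.aeval_C, h3]
      exact (IsScalarTower.algebraMap_apply K (Algebra.adjoin K ({t} : Set L)) L k).symm
    · have h4 : ψ' X = ⟨t, Algebra.self_mem_adjoin_singleton K t⟩ := by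
        simp [ψ']
      simp only [RingHom.coe_comp, Function.comp_apply, RingHom.coe_coe, Polynomial.aeval_X, h4]
      rfl
  have hinj : Function.Injective ψ' := by
    rw [injective_iff_map_eq_zero]
    intro c hc
    have h2 : Polynomial.aeval t c = 0 := by
      have := congrArg (algebraMap (Algebra.adjoin K ({t} : Set L)) L) hc
      rw [← RingHom.comp_apply, hcomp] at this
      simpa using this
    exact transcendental_iff.mp ht c h2
  refine ⟨f.map ψ', (Polynomial.map_ne_zero_iff hinj).mpr hf0, ?_⟩
  rw [Polynomial.aeval_def, Polynomial.eval₂_map, hcomp]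
  exact hfe

lemma onevar {t a : L} {f : K[X][X]} (h0 : ev t a f = 0)
    (hmin : ∀ g : K[X][X], g ≠ 0 → μ g < μ f → ev t a g ≠ 0)
    (hd : derivative f ≠ 0) :
    IsIntegral (↥K⟮t⟯) a ∧ IsSeparable (↥K⟮t⟯) a := by
  have hder : ev t a (derivative f) ≠ 0 := hmin _ hd (μ_derivative_lt hd)
  apply sep_of_aeval (P := f.map (ψ t))
  · rw [ev_eq_aeval_map]; exact h0
  · rw [derivative_map, ev_eq_aeval_map]; exact hder

lemma core (p : ℕ) [Fact p.Prime] [CharP K p] [PerfectField K] {t a : L}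
    (h : ∃ f : K[X][X], f ≠ 0 ∧ ev t a f = 0) :
    (IsIntegral (↥K⟮t⟯) a ∧ IsSeparable (↥K⟮t⟯) a) ∨
    (IsIntegral (↥K⟮a⟯) t ∧ IsSeparable (↥K⟮a⟯) t) := by
  classical
  have hex : ∃ n, ∃ f : K[X][X], (f ≠ 0 ∧ ev t a f = 0) ∧ μ f = n := by
    obtain ⟨f, hf⟩ := h; exact ⟨μ f, f, hf, rfl⟩
  obtain ⟨f, ⟨hf0, hfe⟩, hfn⟩ := Nat.find_spec hex
  have hmin : ∀ g : K[X][X], g ≠ 0 → μ g < μ f → ev t a g ≠ 0 := by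
    intro g hg0 hglt hge
    have h1 := Nat.find_min' hex ⟨g, ⟨hg0, hge⟩, rfl⟩
    omega
  have hμ0 : μ f ≠ 0 := by
    intro h0
    obtain ⟨k, hk⟩ := μ_eq_zero h0
    have hz : algebraMap K L k = 0 := by rw [← hfe, hk, ev_CC]
    have hk0 : k = 0 := (map_eq_zero_iff _ (algebraMap K L).injective).mp hz
    exact hf0 (by rw [hk, hk0]; simp)
  by_cases hd1 : derivative f ≠ 0
  · exact Or.inl (onevar hfe hmin hd1)
  push_neg at hd1
  by_cases hd2 : derivative (swap f) ≠ 0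
  · refine Or.inr (onevar (t := a) (a := t) (f := swap f) ?_ ?_ hd2)
    · rw [ev_swap]; exact hfe
    · intro g hg0 hglt hge
      refine hmin (swap g) (fun hz => hg0 (by rw [← swap_swap g, hz, map_zero])) ?_ ?_
      · rw [μ_swap g]
        rwa [μ_swap f] at hglt
      · rw [ev_swap]; exact hge
  push_neg at hd2
  exfalso
  obtain ⟨g, hg⟩ := exists_pow_of_derivatives_eq_zero p hd1 hd2
  have hg0 : g ≠ 0 := by
    rintro rfl
    rw [zero_pow (Fact.out : p.Prime).ne_zero] at hg
    exact hf0 hg.symm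
  have hμ : μ f = p * μ g := by rw [← hg, μ_pow]
  have hp2 : 2 ≤ p := (Fact.out : p.Prime).two_le
  have hgl : μ g < μ f := by
    rcases Nat.eq_zero_or_pos (μ g) with h' | h'
    · omega
    · calc μ g = 1 * μ g := (one_mul _).symm
        _ < p * μ g := Nat.mul_lt_mul_of_lt_of_le (by omega) le_rfl h'
        _ = μ f := hμ.symm
  apply hmin g hg0 hgl
  have hpow : ev t a g ^ p = 0 := by rw [← map_pow, hg, hfe]
  exact pow_eq_zero_iff (Fact.out : p.Prime).ne_zero |>.mp hpow

lemma epoly_of_isAlgebraic {t a : L} (ht : Transcendental K t)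
    (ha : IsAlgebraic (↥K⟮t⟯) a) : ∃ f : K[X][X], f ≠ 0 ∧ ev t a f = 0 := by
  classical
  have hti : AlgebraicIndependent K (fun _ : Unit => t) :=
    algebraicIndependent_unique_type_iff.mpr ht
  have hrange : IntermediateField.adjoin K (Set.range fun _ : Unit => t) = K⟮t⟯ := by
    rw [Set.range_const]
  let e : FractionRing (MvPolynomial Unit K) ≃ₐ[K] ↥K⟮t⟯ :=
    hti.aevalEquivField.trans (IntermediateField.equivOfEq hrange)
  letI : Algebra (MvPolynomial Unit K) L :=
    ((MvPolynomial.aeval fun _ : Unit => t : MvPolynomial Unit K →ₐ[K] L) :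
      MvPolynomial Unit K →+* L).toAlgebra
  letI : Algebra (FractionRing (MvPolynomial Unit K)) L :=
    (((IntermediateField.val _).comp e.toAlgHom :
      FractionRing (MvPolynomial Unit K) →ₐ[K] L) :
      FractionRing (MvPolynomial Unit K) →+* L).toAlgebra
  haveI : IsScalarTower (MvPolynomial Unit K) (FractionRing (MvPolynomial Unit K)) L :=
    IsScalarTower.of_algebraMap_eq fun c => by
      show MvPolynomial.aeval (fun _ : Unit => t) c
        = ((e (algebraMap (MvPolynomial Unit K) (FractionRing (MvPolynomial Unit K)) c) :
          ↥K⟮t⟯) : L)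
      have h1 : e (algebraMap (MvPolynomial Unit K) (FractionRing (MvPolynomial Unit K)) c)
          = IntermediateField.equivOfEq hrange
            (hti.aevalEquivField (algebraMap (MvPolynomial Unit K)
              (FractionRing (MvPolynomial Unit K)) c)) := rfl
      rw [h1, IntermediateField.equivOfEq_apply]
      rw [hti.aevalEquivField_algebraMap_apply_coe]
  have ha' : IsAlgebraic (FractionRing (MvPolynomial Unit K)) a := by
    obtain ⟨P, hP0, hPa⟩ := ha
    refine ⟨P.map (e.symm : ↥K⟮t⟯ →+* FractionRing (MvPolynomial Unit K)), ?_, ?_⟩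
    · exact (Polynomial.map_ne_zero_iff (e.symm.injective)).mpr hP0
    · rw [Polynomial.aeval_def, Polynomial.eval₂_map]
      have h2 : (algebraMap (FractionRing (MvPolynomial Unit K)) L).comp
          (e.symm : ↥K⟮t⟯ →+* FractionRing (MvPolynomial Unit K))
          = algebraMap (↥K⟮t⟯) L := by
        apply RingHom.ext
        intro z
        show ((e (e.symm z) : ↥K⟮t⟯) : L) = algebraMap (↥K⟮t⟯) L z
        rw [e.apply_symm_apply]
        rfl
      rw [h2, ← Polynomial.aeval_def]
      exact hPa
  have hR0 : IsAlgebraic (MvPolynomial Unit K) a :=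
    (IsFractionRing.isAlgebraic_iff (MvPolynomial Unit K)
      (FractionRing (MvPolynomial Unit K)) L).mpr ha'
  obtain ⟨Q, hQ0, hQa⟩ := hR0
  let Φ : MvPolynomial Unit K →+* K[X] :=
    ((MvPolynomial.pUnitAlgEquiv K : MvPolynomial PUnit K ≃ₐ[K] K[X]) :
      MvPolynomial PUnit K →+* K[X])
  refine ⟨Q.map Φ, ?_, ?_⟩
  · exact (Polynomial.map_ne_zero_iff ((MvPolynomial.pUnitAlgEquiv K).injective)).mpr hQ0
  · have hcomp : (((Polynomial.aeval t : K[X] →ₐ[K] L) : K[X] →+* L)).comp Φ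
        = algebraMap (MvPolynomial Unit K) L := by
      apply MvPolynomial.ringHom_ext
      all_goals
        intro z
        rw [show (algebraMap (MvPolynomial Unit K) L)
          = ((MvPolynomial.aeval fun _ : Unit => t : MvPolynomial Unit K →ₐ[K] L) :
            MvPolynomial Unit K →+* L) from rfl]
        simp [Φ]
    show Polynomial.eval₂ ((Polynomial.aeval t : K[X] →ₐ[K] L) : K[X] →+* L) a (Q.map Φ) = 0
    rw [Polynomial.eval₂_map, hcomp, ← Polynomial.aeval_def]
    exact hQa

/-! ### Field-theoretic assembly -/

/-- Inclusion ring hom between intermediate fields over different bases. -/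
def inclRing (E : IntermediateField K L) {F : Type*} [Field F] [Algebra F L]
    (M : IntermediateField F L) (h : ∀ z : L, z ∈ E → z ∈ M) : ↥E →+* ↥M where
  toFun z := ⟨z.1, h z.1 z.2⟩
  map_one' := rfl
  map_mul' _ _ := rfl
  map_zero' := rfl
  map_add' _ _ := rfl

lemma isIntegral_all {t x : L} (algx : ∀ b : L, IsAlgebraic (↥K⟮x⟯) b)
    (hxt : IsIntegral (↥K⟮t⟯) x) (a : L) : IsIntegral (↥K⟮t⟯) a := by
  let M : IntermediateField (↥K⟮t⟯) L := IntermediateField.adjoin (↥K⟮t⟯) {x}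
  haveI : FiniteDimensional (↥K⟮t⟯) ↥M := IntermediateField.adjoin.finiteDimensional hxt
  have h : ∀ z : L, z ∈ K⟮x⟯ → z ∈ M := by
    have hle : K⟮x⟯ ≤ M.restrictScalars K := by
      rw [IntermediateField.adjoin_le_iff]
      intro y hy
      rw [Set.mem_singleton_iff] at hy
      subst hy
      rw [SetLike.mem_coe, IntermediateField.mem_restrictScalars]
      exact IntermediateField.subset_adjoin _ _ rfl
    intro z hz
    exact (IntermediateField.mem_restrictScalars K).mp (hle hz)
  letI : Algebra (↥K⟮x⟯) ↥M := (inclRing _ M h).toAlgebra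
  haveI : IsScalarTower (↥K⟮x⟯) ↥M L :=
    IsScalarTower.of_algebraMap_eq (R := ↥K⟮x⟯) (S := ↥M) (A := L) fun z => rfl
  have haM : IsIntegral (↥M) a := IsIntegral.tower_top ((algx a).isIntegral)
  exact isIntegral_trans a haM

lemma basisT {t : L} (ht : Transcendental K t) (halg : ∀ b : L, IsAlgebraic (↥K⟮t⟯) b) :
    IsTranscendenceBasis K (fun _ : Unit => t) := by
  have hti : AlgebraicIndependent K (fun _ : Unit => t) :=
    algebraicIndependent_unique_type_iff.mpr ht
  refine ⟨hti, ?_⟩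
  intro s hs hsub
  have htmem : t ∈ s := hsub ⟨default, rfl⟩
  by_contra hne
  have hex : ∃ u, u ∈ s ∧ u ∉ Set.range (fun _ : Unit => t) := by
    by_contra h2
    push_neg at h2
    exact hne (le_antisymm hsub h2)
  obtain ⟨u, hus, hur⟩ := hex
  have hut : u ≠ t := fun h => hur ⟨default, h.symm⟩
  let g : Option Unit → s := fun o => o.elim ⟨u, hus⟩ (fun _ => ⟨t, htmem⟩)
  have hginj : Function.Injective g := by
    intro o1 o2 h12
    have hv := congrArg Subtype.val h12
    cases o1 <;> cases o2
    · rfl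
    · exact absurd hv hut
    · exact absurd hv.symm hut
    · exact congrArg some (Subsingleton.elim _ _)
  have hopt : AlgebraicIndependent K (fun o : Option Unit => o.elim u (fun _ => t)) := by
    have h3 := hs.comp g hginj
    convert h3 using 1
    funext o
    cases o <;> rfl
  have htrans : Transcendental (Algebra.adjoin K (Set.range fun _ : Unit => t)) u :=
    (hti.option_iff_transcendental u).mp hopt
  rw [Set.range_const] at htrans
  exact htrans (isAlgebraic_adjoinRing_of_epoly ht (epoly_of_isAlgebraic ht (halg u)))

lemma sep_base {t a : L} (ha : a ∈ (algebraMap K L).range) : IsSeparable (↥K⟮t⟯) a := by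
  obtain ⟨k, rfl⟩ := ha
  rw [IsScalarTower.algebraMap_apply K (↥K⟮t⟯) L]
  exact isSeparable_algebraMap _

lemma sep_self {a : L} : IsSeparable (↥K⟮a⟯) a := by
  have h : a = algebraMap (↥K⟮a⟯) L (AdjoinSimple.gen K a) :=
    (AdjoinSimple.algebraMap_gen K a).symm
  rw [h]
  exact isSeparable_algebraMap _

lemma sep_transfer {a t b : L} (hsep_t : IsSeparable (↥K⟮a⟯) t)
    (hb : IsSeparable (↥K⟮t⟯) b) : IsSeparable (↥K⟮a⟯) b := by
  let M : IntermediateField (↥K⟮a⟯) L := IntermediateField.adjoin (↥K⟮a⟯) {t}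
  haveI : Algebra.IsSeparable (↥K⟮a⟯) ↥M :=
    (IntermediateField.isSeparable_adjoin_simple_iff_isSeparable _ _).mpr hsep_t
  have h : ∀ z : L, z ∈ K⟮t⟯ → z ∈ M := by
    have hle : K⟮t⟯ ≤ M.restrictScalars K := by
      rw [IntermediateField.adjoin_le_iff]
      intro y hy
      rw [Set.mem_singleton_iff] at hy
      subst hy
      rw [SetLike.mem_coe, IntermediateField.mem_restrictScalars]
      exact IntermediateField.subset_adjoin _ _ rfl
    intro z hz
    exact (IntermediateField.mem_restrictScalars K).mp (hle hz)
  letI : Algebra (↥K⟮t⟯) ↥M := (inclRing _ M h).toAlgebra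
  haveI : IsScalarTower (↥K⟮t⟯) ↥M L :=
    IsScalarTower.of_algebraMap_eq (R := ↥K⟮t⟯) (S := ↥M) (A := L) fun z => rfl
  have hbM : IsSeparable (↥M) b := IsSeparable.tower_top _ hb
  exact IsSeparable.of_algebra_isSeparable_of_isSeparable (↥K⟮a⟯) hbM

end Ev

end MacLaneProof

open MacLaneProof

/-- MacLane's theorem (field-theoretic form): a finitely generated field extension `L/K`
of transcendence degree `1` with `K` algebraically closed in `L`, `K` perfect of
characteristic `p > 0`, is separably generated: there is a transcendence basis `t` such
that `L` is finite and separable over `K(t)`. -/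
theorem stmt_2 (p : ℕ) [Fact p.Prime] (K L : Type*) [Field K] [Field L] [Algebra K L]
    [CharP K p] [PerfectField K]
    (hfg : ∃ S : Finset L, IntermediateField.adjoin K (S : Set L) = ⊤)
    (htr : ∃ x : L, IsTranscendenceBasis K (fun _ : Unit => x))
    (hclosed : ∀ x : L, IsAlgebraic K x → x ∈ (algebraMap K L).range) :
    ∃ t : L, IsTranscendenceBasis K (fun _ : Unit => t) ∧
      FiniteDimensional ↥(IntermediateField.adjoin K ({t} : Set L)) L ∧
      Algebra.IsSeparable ↥(IntermediateField.adjoin K ({t} : Set L)) L := by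
  classical
  obtain ⟨x, hx⟩ := htr
  have htx : Transcendental K x := hx.1.transcendental default
  -- everything is algebraic over K(x)
  have algx : ∀ b : L, IsAlgebraic (↥K⟮x⟯) b := by
    have h1 := hx.isAlgebraic_field
    have hrange : IntermediateField.adjoin K (Set.range fun _ : Unit => x) = K⟮x⟯ := by
      rw [Set.range_const]
    intro b
    have h2 := h1.isAlgebraic (x := b)
    rw [hrange] at h2
    exact h2
  -- for every transcendental t, everything is integral over K(t)
  have hall : ∀ t : L, Transcendental K t → ∀ b : L, IsIntegral (↥K⟮t⟯) b := by
    intro t ht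
    have hxt : IsIntegral (↥K⟮t⟯) x := by
      have hep : ∃ f : K[X][X], f ≠ 0 ∧ ev x t f = 0 :=
        epoly_of_isAlgebraic htx (algx t)
      obtain ⟨f, hf0, hfe⟩ := hep
      have hep' : ∃ f : K[X][X], f ≠ 0 ∧ ev t x f = 0 :=
        ⟨swap f, fun hz => hf0 (by rw [← swap_swap f, hz, map_zero]), by rw [ev_swap]; exact hfe⟩
      exact (isAlgebraic_of_epoly ht hep').isIntegral
    exact isIntegral_all algx hxt
  -- the inductive construction of a separating element
  have main : ∀ S : Finset L, ∃ t : L, Transcendental K t ∧ ∀ a ∈ S, IsSeparable (↥K⟮t⟯) a := by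
    intro S
    induction S using Finset.induction_on with
    | empty => exact ⟨x, htx, by simp⟩
    | @insert a S ha ih =>
      obtain ⟨t, ht, hS⟩ := ih
      by_cases hmem : a ∈ (algebraMap K L).range
      · refine ⟨t, ht, ?_⟩
        intro b hb
        rcases Finset.mem_insert.mp hb with rfl | hb'
        · exact sep_base hmem
        · exact hS b hb'
      · have hat : Transcendental K a := fun halg => hmem (hclosed a halg)
        have hep : ∃ f : K[X][X], f ≠ 0 ∧ ev t a f = 0 :=
          epoly_of_isAlgebraic ht (hall t ht a).isAlgebraic
        rcases core p hep with ⟨_, hsep⟩ | ⟨_, hsepT⟩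
        · refine ⟨t, ht, ?_⟩
          intro b hb
          rcases Finset.mem_insert.mp hb with rfl | hb'
          · exact hsep
          · exact hS b hb'
        · refine ⟨a, hat, ?_⟩
          intro b hb
          rcases Finset.mem_insert.mp hb with rfl | hb'
          · exact sep_self
          · exact sep_transfer hsepT (hS b hb')
  obtain ⟨S, hS⟩ := hfg
  obtain ⟨t, ht, hsepS⟩ := main S
  have halli : ∀ b : L, IsIntegral (↥K⟮t⟯) b := hall t ht
  have halg : ∀ b : L, IsAlgebraic (↥K⟮t⟯) b := fun b => (halli b).isAlgebraic
  refine ⟨t, basisT ht halg, ?_, ?_⟩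
  · -- finite dimensionality
    have htop : IntermediateField.adjoin (↥K⟮t⟯) ((S : Set L)) = ⊤ := by
      rw [eq_top_iff]
      intro z _
      have hz : z ∈ IntermediateField.adjoin K (S : Set L) := by rw [hS]; trivial
      have hle : IntermediateField.adjoin K (S : Set L)
          ≤ (IntermediateField.adjoin (↥K⟮t⟯) (S : Set L)).restrictScalars K := by
        rw [IntermediateField.adjoin_le_iff]
        intro y hy
        rw [SetLike.mem_coe, IntermediateField.mem_restrictScalars]
        exact IntermediateField.subset_adjoin _ _ hy
      exact (IntermediateField.mem_restrictScalars K).mp (hle hz)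
    haveI hfd : FiniteDimensional (↥K⟮t⟯) ↥(IntermediateField.adjoin (↥K⟮t⟯) (S : Set L)) :=
      IntermediateField.finiteDimensional_adjoin (fun z _ => halli z)
    rw [htop] at hfd
    exact (IntermediateField.topEquiv (F := ↥K⟮t⟯) (E := L)).toLinearEquiv.finiteDimensional
  · -- separability
    have htop : IntermediateField.adjoin (↥K⟮t⟯) ((S : Set L)) = ⊤ := by
      rw [eq_top_iff]
      intro z _
      have hz : z ∈ IntermediateField.adjoin K (S : Set L) := by rw [hS]; trivial
      have hle : IntermediateField.adjoin K (S : Set L)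
          ≤ (IntermediateField.adjoin (↥K⟮t⟯) (S : Set L)).restrictScalars K := by
        rw [IntermediateField.adjoin_le_iff]
        intro y hy
        rw [SetLike.mem_coe, IntermediateField.mem_restrictScalars]
        exact IntermediateField.subset_adjoin _ _ hy
      exact (IntermediateField.mem_restrictScalars K).mp (hle hz)
    haveI hsep' : Algebra.IsSeparable (↥K⟮t⟯) ↥(IntermediateField.adjoin (↥K⟮t⟯) (S : Set L)) :=
      (IntermediateField.isSeparable_adjoin_iff_isSeparable _ _).mpr
        (fun z hz => hsepS z (by exact_mod_cast hz))
    rw [htop] at hsep'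
    exact AlgEquiv.Algebra.isSeparable (IntermediateField.topEquiv (F := ↥K⟮t⟯) (E := L))
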